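/- Trace formula for the mass of the splitting scheme: let (Ω, ℱ, ℙ) be a probability space, u₀ ∈ L² deterministic, τ > 0, α > 0, and let (δW_n)_{n∈ℕ} be a mutually independent family of Borel-measurable L²-valued random variables, each Bochner integrable with 𝔼[δW_n] = 0 and 𝔼[‖δW_n‖²_{L²}] = c for a fixed constant c ∈ [0,∞). Define recursively u_{n+1} = S(τ)(Φ_τ(u_n) − i α δW_n). Then for every n ∈ ℕ, 𝔼[‖u_n‖²_{L²}] = ‖u₀‖²_{L²} + n α² c. (With c = τ·Tr(Q) this is the trace formula 𝔼[M(u_n)] = M(u₀) + t_n α² Tr(Q), t_n = nτ.) -/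

import Mathlib

open MeasureTheory Complex Real AddCircle ProbabilityTheory

noncomputable section

instance fact2pi : Fact (0 < 2 * Real.pi) := ⟨by positivity⟩

/-- `L²(𝕋, ℂ)` with respect to the Haar probability measure on the circle of length `2π`. -/
abbrev L2h := Lp ℂ 2 (@AddCircle.haarAddCircle (2 * Real.pi) _)

/-- The Fourier Hilbert basis `(e_k)_{k ∈ ℤ}` of `L²(𝕋, ℂ)`. -/
abbrev fourierB : HilbertBasis ℤ ℂ L2h := @fourierBasis (2 * Real.pi) _

/-- The convolution `V ⋆ |u|²`. -/
def Vconv (V : C(AddCircle (2 * Real.pi), ℝ)) (u : L2h) : AddCircle (2 * Real.pi) → ℝ :=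
  fun x => ∫ y, V (x - y) * ‖(u : AddCircle (2 * Real.pi) → ℂ) y‖ ^ 2 ∂(haarAddCircle)

/-- The flow map `Φ_t(u) = exp(−i t (V⋆|u|²))·u` as a function. -/
def PhiFun (V : C(AddCircle (2 * Real.pi), ℝ)) (t : ℝ) (u : L2h) :
    AddCircle (2 * Real.pi) → ℂ :=
  fun x => Complex.exp (-(Complex.I * t * (Vconv V u x))) * (u : AddCircle (2 * Real.pi) → ℂ) x

open Classical in
/-- `Φ_t(u)` as an element of `L²`. -/
def PhiL (V : C(AddCircle (2 * Real.pi), ℝ)) (t : ℝ) (u : L2h) : L2h :=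
  if h : MemLp (PhiFun V t u) 2 haarAddCircle then h.toLp _ else 0

/-! ### Auxiliary material -/

instance factTwoNeTop : Fact ((2 : ENNReal) ≠ ⊤) := ⟨by norm_num⟩

set_option synthInstance.maxHeartbeats 1000000 in
instance L2h.secondCountable : SecondCountableTopology L2h := by infer_instance

local notation "μc" => (@AddCircle.haarAddCircle (2 * Real.pi) _)

lemma aux_exp_eq (t r : ℝ) :
    -(Complex.I * t * r) = ((-(t * r) : ℝ) : ℂ) * Complex.I := by
  push_cast; ring

lemma norm_exp_I (a : ℝ) : ‖Complex.exp ((a : ℂ) * Complex.I)‖ = 1 := by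
  rw [Complex.norm_exp]
  simp

lemma norm_exp_I_sub_one (x : ℝ) : ‖Complex.exp ((x : ℂ) * Complex.I) - 1‖ ≤ |x| := by
  rw [Complex.exp_mul_I]
  have h1 : Complex.cos x + Complex.sin x * Complex.I - 1
      = ((Real.cos x - 1 : ℝ) : ℂ) + ((Real.sin x : ℝ) : ℂ) * Complex.I := by
    push_cast; ring
  rw [h1, Complex.norm_def, Complex.normSq_add_mul_I]
  have h2 : (Real.cos x - 1) ^ 2 + Real.sin x ^ 2 ≤ x ^ 2 := by
    nlinarith [Real.sin_sq_add_cos_sq x, Real.one_sub_sq_div_two_le_cos (x := x)]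
  calc √((Real.cos x - 1) ^ 2 + Real.sin x ^ 2) ≤ √(x ^ 2) := Real.sqrt_le_sqrt h2
    _ = |x| := Real.sqrt_sq_eq_abs x

lemma norm_exp_I_sub (a b : ℝ) :
    ‖Complex.exp ((a : ℂ) * Complex.I) - Complex.exp ((b : ℂ) * Complex.I)‖ ≤ |a - b| := by
  have h : Complex.exp ((a : ℂ) * Complex.I) - Complex.exp ((b : ℂ) * Complex.I)
      = Complex.exp ((b : ℂ) * Complex.I) * (Complex.exp (((a - b : ℝ) : ℂ) * Complex.I) - 1) := by
    rw [mul_sub, ← Complex.exp_add, mul_one]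
    push_cast; ring_nf
  rw [h, norm_mul, norm_exp_I, one_mul]
  exact norm_exp_I_sub_one _

lemma phiFun_norm_eq (V : C(AddCircle (2 * Real.pi), ℝ)) (t : ℝ) (u : L2h) (x : AddCircle (2 * Real.pi)) :
    ‖PhiFun V t u x‖ = ‖(u : AddCircle (2 * Real.pi) → ℂ) x‖ := by
  simp only [PhiFun]
  rw [norm_mul, aux_exp_eq, norm_exp_I, one_mul]

lemma vconv_sm (V : C(AddCircle (2 * Real.pi), ℝ)) (u : L2h) :
    StronglyMeasurable (Vconv V u) := by
  have hu : StronglyMeasurable (u : AddCircle (2 * Real.pi) → ℂ) := Lp.stronglyMeasurable u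
  have hF : StronglyMeasurable (fun p : AddCircle (2 * Real.pi) × AddCircle (2 * Real.pi) =>
      V (p.1 - p.2) * ‖(u : AddCircle (2 * Real.pi) → ℂ) p.2‖ ^ 2) := by
    apply StronglyMeasurable.mul
    · exact (V.continuous.comp (continuous_fst.sub continuous_snd)).stronglyMeasurable
    · have h2 : StronglyMeasurable (fun y => ‖(u : AddCircle (2 * Real.pi) → ℂ) y‖ ^ 2) := by
        simp only [pow_two]
        exact hu.norm.mul hu.norm
      exact h2.comp_measurable measurable_snd
  exact hF.integral_prod_right'

lemma phiFun_memℒp (V : C(AddCircle (2 * Real.pi), ℝ)) (t : ℝ) (u : L2h) :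
    MemLp (PhiFun V t u) 2 μc := by
  have hexp : StronglyMeasurable
      (fun x => Complex.exp (-(Complex.I * t * (Vconv V u x : ℂ)))) :=
    Complex.continuous_exp.comp_stronglyMeasurable
      (((Complex.continuous_ofReal.comp_stronglyMeasurable (vconv_sm V u)).const_mul
        (Complex.I * t)).neg)
  refine ⟨hexp.aestronglyMeasurable.mul (Lp.aestronglyMeasurable u), ?_⟩
  rw [eLpNorm_congr_norm_ae (Filter.Eventually.of_forall (phiFun_norm_eq V t u))]
  exact (Lp.memLp u).2

lemma phiL_eq (V : C(AddCircle (2 * Real.pi), ℝ)) (t : ℝ) (u : L2h) :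
    PhiL V t u = MemLp.toLp (PhiFun V t u) (phiFun_memℒp V t u) := by
  unfold PhiL
  exact dif_pos _

lemma phiL_coeFn (V : C(AddCircle (2 * Real.pi), ℝ)) (t : ℝ) (u : L2h) :
    (PhiL V t u : AddCircle (2 * Real.pi) → ℂ) =ᵐ[μc] PhiFun V t u := by
  rw [phiL_eq]; exact MemLp.coeFn_toLp _

lemma phiL_norm (V : C(AddCircle (2 * Real.pi), ℝ)) (t : ℝ) (u : L2h) :
    ‖PhiL V t u‖ = ‖u‖ := by
  rw [phiL_eq, Lp.norm_toLp,
    eLpNorm_congr_norm_ae (Filter.Eventually.of_forall (phiFun_norm_eq V t u)), ← Lp.norm_def]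

lemma mul_int_of_memℒp2 {X : Type*} [MeasurableSpace X] {μ : Measure X} {f g : X → ℝ}
    (hf : MemLp f 2 μ) (hg : MemLp g 2 μ) : Integrable (fun x => f x * g x) μ := by
  have h := L2.integrable_inner (𝕜 := ℝ) (hf.toLp f) (hg.toLp g)
  refine h.congr ?_
  filter_upwards [hf.coeFn_toLp, hg.coeFn_toLp] with x h1 h2
  rw [RCLike.inner_apply, starRingEnd_apply, star_trivial, h1, h2, mul_comm]

lemma sq_integrable (u : L2h) :
    Integrable (fun y => ‖(u : AddCircle (2 * Real.pi) → ℂ) y‖ ^ 2) μc :=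
  (memLp_two_iff_integrable_sq (Lp.aestronglyMeasurable u).norm).mp (Lp.memLp u).norm

lemma norm_mul_integrable (w v : L2h) :
    Integrable (fun y => ‖(w : AddCircle (2 * Real.pi) → ℂ) y‖ *
      ‖(v : AddCircle (2 * Real.pi) → ℂ) y‖) μc :=
  mul_int_of_memℒp2 (Lp.memLp w).norm (Lp.memLp v).norm

lemma int_norm_mul_le (w v : L2h) :
    ∫ y, ‖(w : AddCircle (2 * Real.pi) → ℂ) y‖ *
      ‖(v : AddCircle (2 * Real.pi) → ℂ) y‖ ∂μc ≤ ‖w‖ * ‖v‖ := by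
  have h1 : ∫ y, ‖(w : AddCircle (2 * Real.pi) → ℂ) y‖ *
      ‖(v : AddCircle (2 * Real.pi) → ℂ) y‖ ∂μc
      = (inner ℝ (MemLp.toLp _ (Lp.memLp w).norm) (MemLp.toLp _ (Lp.memLp v).norm) : ℝ) := by
    rw [L2.inner_def]
    refine integral_congr_ae ?_
    filter_upwards [MemLp.coeFn_toLp (Lp.memLp w).norm, MemLp.coeFn_toLp (Lp.memLp v).norm]
      with y h1 h2
    rw [RCLike.inner_apply, starRingEnd_apply, star_trivial, h1, h2, mul_comm]
  have h2 : ‖(MemLp.toLp _ (Lp.memLp w).norm : Lp ℝ 2 μc)‖ = ‖w‖ := by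
    rw [Lp.norm_toLp, eLpNorm_norm, ← Lp.norm_def]
  have h3 : ‖(MemLp.toLp _ (Lp.memLp v).norm : Lp ℝ 2 μc)‖ = ‖v‖ := by
    rw [Lp.norm_toLp, eLpNorm_norm, ← Lp.norm_def]
  rw [h1]
  calc (inner ℝ (MemLp.toLp _ (Lp.memLp w).norm) (MemLp.toLp _ (Lp.memLp v).norm) : ℝ)
      ≤ ‖(MemLp.toLp _ (Lp.memLp w).norm : Lp ℝ 2 μc)‖ *
        ‖(MemLp.toLp _ (Lp.memLp v).norm : Lp ℝ 2 μc)‖ := real_inner_le_norm _ _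
    _ = ‖w‖ * ‖v‖ := by rw [h2, h3]

lemma int_sq_diff_le (u v : L2h) :
    ∫ y, |‖(u : AddCircle (2 * Real.pi) → ℂ) y‖ ^ 2 -
      ‖(v : AddCircle (2 * Real.pi) → ℂ) y‖ ^ 2| ∂μc ≤ (‖u‖ + ‖v‖) * ‖u - v‖ := by
  have hint1 : Integrable (fun y => |‖(u : AddCircle (2 * Real.pi) → ℂ) y‖ ^ 2 -
      ‖(v : AddCircle (2 * Real.pi) → ℂ) y‖ ^ 2|) μc :=
    ((sq_integrable u).sub (sq_integrable v)).abs
  have hle : ∀ᵐ y ∂μc, |‖(u : AddCircle (2 * Real.pi) → ℂ) y‖ ^ 2 -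
      ‖(v : AddCircle (2 * Real.pi) → ℂ) y‖ ^ 2|
      ≤ ‖((u - v : L2h) : AddCircle (2 * Real.pi) → ℂ) y‖ *
          ‖(u : AddCircle (2 * Real.pi) → ℂ) y‖ +
        ‖((u - v : L2h) : AddCircle (2 * Real.pi) → ℂ) y‖ *
          ‖(v : AddCircle (2 * Real.pi) → ℂ) y‖ := by
    filter_upwards [Lp.coeFn_sub u v] with y hy
    rw [hy, Pi.sub_apply]
    have h0 : |‖(u : AddCircle (2 * Real.pi) → ℂ) y‖ - ‖(v : AddCircle (2 * Real.pi) → ℂ) y‖|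
        ≤ ‖(u : AddCircle (2 * Real.pi) → ℂ) y - (v : AddCircle (2 * Real.pi) → ℂ) y‖ :=
      abs_norm_sub_norm_le _ _
    have e1 : |‖(u : AddCircle (2 * Real.pi) → ℂ) y‖ ^ 2 -
        ‖(v : AddCircle (2 * Real.pi) → ℂ) y‖ ^ 2|
        = |‖(u : AddCircle (2 * Real.pi) → ℂ) y‖ - ‖(v : AddCircle (2 * Real.pi) → ℂ) y‖| *
          (‖(u : AddCircle (2 * Real.pi) → ℂ) y‖ + ‖(v : AddCircle (2 * Real.pi) → ℂ) y‖) := by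
      rw [← _root_.abs_of_nonneg (add_nonneg (norm_nonneg _) (norm_nonneg _)), ← abs_mul]
      ring_nf
    rw [e1]
    nlinarith [norm_nonneg ((u : AddCircle (2 * Real.pi) → ℂ) y),
      norm_nonneg ((v : AddCircle (2 * Real.pi) → ℂ) y), abs_nonneg
        (‖(u : AddCircle (2 * Real.pi) → ℂ) y‖ - ‖(v : AddCircle (2 * Real.pi) → ℂ) y‖)]
  calc ∫ y, |‖(u : AddCircle (2 * Real.pi) → ℂ) y‖ ^ 2 -
        ‖(v : AddCircle (2 * Real.pi) → ℂ) y‖ ^ 2| ∂μc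
      ≤ ∫ y, (‖((u - v : L2h) : AddCircle (2 * Real.pi) → ℂ) y‖ *
          ‖(u : AddCircle (2 * Real.pi) → ℂ) y‖ +
        ‖((u - v : L2h) : AddCircle (2 * Real.pi) → ℂ) y‖ *
          ‖(v : AddCircle (2 * Real.pi) → ℂ) y‖) ∂μc :=
      integral_mono_ae hint1 ((norm_mul_integrable (u - v) u).add (norm_mul_integrable (u - v) v)) hle
    _ = (∫ y, ‖((u - v : L2h) : AddCircle (2 * Real.pi) → ℂ) y‖ *
          ‖(u : AddCircle (2 * Real.pi) → ℂ) y‖ ∂μc) +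
        ∫ y, ‖((u - v : L2h) : AddCircle (2 * Real.pi) → ℂ) y‖ *
          ‖(v : AddCircle (2 * Real.pi) → ℂ) y‖ ∂μc :=
      integral_add (norm_mul_integrable _ _) (norm_mul_integrable _ _)
    _ ≤ ‖u - v‖ * ‖u‖ + ‖u - v‖ * ‖v‖ :=
      add_le_add (int_norm_mul_le _ _) (int_norm_mul_le _ _)
    _ = (‖u‖ + ‖v‖) * ‖u - v‖ := by ring

lemma vconv_diff_le (V : C(AddCircle (2 * Real.pi), ℝ)) (u v : L2h) (x : AddCircle (2 * Real.pi)) :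
    |Vconv V u x - Vconv V v x| ≤ ‖V‖ * ((‖u‖ + ‖v‖) * ‖u - v‖) := by
  have hbV : ∀ z, |V z| ≤ ‖V‖ := fun z => by
    simpa [Real.norm_eq_abs] using V.norm_coe_le_norm z
  have hiu : Integrable (fun y => V (x - y) * ‖(u : AddCircle (2 * Real.pi) → ℂ) y‖ ^ 2) μc :=
    (sq_integrable u).bdd_mul
      (V.continuous.comp (continuous_const.sub continuous_id)).aestronglyMeasurable
      (c := ‖V‖) (Filter.Eventually.of_forall fun y => by simpa [Real.norm_eq_abs] using hbV (x - y))
  have hiv : Integrable (fun y => V (x - y) * ‖(v : AddCircle (2 * Real.pi) → ℂ) y‖ ^ 2) μc :=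
    (sq_integrable v).bdd_mul
      (V.continuous.comp (continuous_const.sub continuous_id)).aestronglyMeasurable
      (c := ‖V‖) (Filter.Eventually.of_forall fun y => by simpa [Real.norm_eq_abs] using hbV (x - y))
  have heq : Vconv V u x - Vconv V v x
      = ∫ y, (V (x - y) * ‖(u : AddCircle (2 * Real.pi) → ℂ) y‖ ^ 2 -
          V (x - y) * ‖(v : AddCircle (2 * Real.pi) → ℂ) y‖ ^ 2) ∂μc := by
    unfold Vconv
    exact (integral_sub hiu hiv).symm
  rw [heq]
  have h2 : |∫ y, (V (x - y) * ‖(u : AddCircle (2 * Real.pi) → ℂ) y‖ ^ 2 -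
      V (x - y) * ‖(v : AddCircle (2 * Real.pi) → ℂ) y‖ ^ 2) ∂μc|
      ≤ ∫ y, |V (x - y) * ‖(u : AddCircle (2 * Real.pi) → ℂ) y‖ ^ 2 -
        V (x - y) * ‖(v : AddCircle (2 * Real.pi) → ℂ) y‖ ^ 2| ∂μc := by
    simpa [Real.norm_eq_abs] using norm_integral_le_integral_norm (μ := μc)
      (fun y => V (x - y) * ‖(u : AddCircle (2 * Real.pi) → ℂ) y‖ ^ 2 -
        V (x - y) * ‖(v : AddCircle (2 * Real.pi) → ℂ) y‖ ^ 2)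
  refine h2.trans ?_
  have h3 : ∫ y, |V (x - y) * ‖(u : AddCircle (2 * Real.pi) → ℂ) y‖ ^ 2 -
      V (x - y) * ‖(v : AddCircle (2 * Real.pi) → ℂ) y‖ ^ 2| ∂μc
      ≤ ∫ y, ‖V‖ * |‖(u : AddCircle (2 * Real.pi) → ℂ) y‖ ^ 2 -
        ‖(v : AddCircle (2 * Real.pi) → ℂ) y‖ ^ 2| ∂μc := by
    refine integral_mono (hiu.sub hiv).abs
      ((((sq_integrable u).sub (sq_integrable v)).abs).const_mul ‖V‖) fun y => ?_
    rw [← mul_sub, abs_mul]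
    exact mul_le_mul_of_nonneg_right (hbV _) (abs_nonneg _)
  refine h3.trans ?_
  rw [integral_const_mul]
  exact mul_le_mul_of_nonneg_left (int_sq_diff_le u v) (norm_nonneg V)

lemma phiL_sub_le (V : C(AddCircle (2 * Real.pi), ℝ)) (t : ℝ) (u v : L2h) :
    ‖PhiL V t u - PhiL V t v‖
      ≤ ‖u - v‖ + (|t| * (‖V‖ * ((‖u‖ + ‖v‖) * ‖u - v‖))) * ‖v‖ := by
  set K := |t| * (‖V‖ * ((‖u‖ + ‖v‖) * ‖u - v‖)) with hKdef
  have hK0 : 0 ≤ K := by positivity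
  have hpt : ∀ᵐ x ∂μc, ‖PhiFun V t u x - PhiFun V t v x‖
      ≤ ‖((u - v : L2h) : AddCircle (2 * Real.pi) → ℂ) x‖ +
        K * ‖(v : AddCircle (2 * Real.pi) → ℂ) x‖ := by
    filter_upwards [Lp.coeFn_sub u v] with x hx
    rw [hx, Pi.sub_apply]
    have hsplit : PhiFun V t u x - PhiFun V t v x
        = Complex.exp (-(Complex.I * t * (Vconv V u x : ℂ))) *
            ((u : AddCircle (2 * Real.pi) → ℂ) x - (v : AddCircle (2 * Real.pi) → ℂ) x)
          + (Complex.exp (-(Complex.I * t * (Vconv V u x : ℂ))) -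
              Complex.exp (-(Complex.I * t * (Vconv V v x : ℂ)))) *
            (v : AddCircle (2 * Real.pi) → ℂ) x := by
      simp only [PhiFun]; ring
    rw [hsplit]
    refine (norm_add_le _ _).trans ?_
    have hA : ‖Complex.exp (-(Complex.I * t * (Vconv V u x : ℂ))) *
        ((u : AddCircle (2 * Real.pi) → ℂ) x - (v : AddCircle (2 * Real.pi) → ℂ) x)‖
        = ‖(u : AddCircle (2 * Real.pi) → ℂ) x - (v : AddCircle (2 * Real.pi) → ℂ) x‖ := by
      rw [norm_mul, aux_exp_eq, norm_exp_I, one_mul]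
    have hB : ‖(Complex.exp (-(Complex.I * t * (Vconv V u x : ℂ))) -
        Complex.exp (-(Complex.I * t * (Vconv V v x : ℂ)))) *
          (v : AddCircle (2 * Real.pi) → ℂ) x‖
        ≤ K * ‖(v : AddCircle (2 * Real.pi) → ℂ) x‖ := by
      rw [norm_mul]
      refine mul_le_mul_of_nonneg_right ?_ (norm_nonneg _)
      rw [aux_exp_eq, aux_exp_eq]
      refine (norm_exp_I_sub _ _).trans ?_
      have : |-(t * Vconv V u x) - -(t * Vconv V v x)| = |t| * |Vconv V u x - Vconv V v x| := by
        rw [← abs_mul, abs_sub_comm]; congr 1; ring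
      rw [this, hKdef]
      exact mul_le_mul_of_nonneg_left (vconv_diff_le V u v x) (abs_nonneg t)
    rw [hA]
    exact add_le_add le_rfl hB
  have hcoe : ((PhiL V t u - PhiL V t v : L2h) : AddCircle (2 * Real.pi) → ℂ)
      =ᵐ[μc] fun x => PhiFun V t u x - PhiFun V t v x := by
    filter_upwards [Lp.coeFn_sub (PhiL V t u) (PhiL V t v), phiL_coeFn V t u, phiL_coeFn V t v]
      with x h1 h2 h3
    rw [h1, Pi.sub_apply, h2, h3]
  have hnorm : ‖PhiL V t u - PhiL V t v‖
      = (eLpNorm (fun x => PhiFun V t u x - PhiFun V t v x) 2 μc).toReal := by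
    rw [Lp.norm_def, eLpNorm_congr_ae hcoe]
  have e1 : eLpNorm (fun x => PhiFun V t u x - PhiFun V t v x) 2 μc
      ≤ eLpNorm ((u - v : L2h) : AddCircle (2 * Real.pi) → ℂ) 2 μc +
        eLpNorm (fun x => K * ‖(v : AddCircle (2 * Real.pi) → ℂ) x‖) 2 μc := by
    have h0 : eLpNorm (fun x => PhiFun V t u x - PhiFun V t v x) 2 μc
        ≤ eLpNorm (fun x => ‖((u - v : L2h) : AddCircle (2 * Real.pi) → ℂ) x‖ +
            K * ‖(v : AddCircle (2 * Real.pi) → ℂ) x‖) 2 μc := by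
      refine eLpNorm_mono_ae (hpt.mono fun x hx => ?_)
      have hnn : 0 ≤ ‖((u - v : L2h) : AddCircle (2 * Real.pi) → ℂ) x‖ +
          K * ‖(v : AddCircle (2 * Real.pi) → ℂ) x‖ := by positivity
      rwa [Real.norm_eq_abs, _root_.abs_of_nonneg hnn]
    refine h0.trans ?_
    refine (eLpNorm_add_le ((Lp.aestronglyMeasurable (u - v)).norm)
      (((Lp.aestronglyMeasurable v).norm).const_mul K) one_le_two).trans ?_
    rw [eLpNorm_norm]
  have e2 : eLpNorm (fun x => K * ‖(v : AddCircle (2 * Real.pi) → ℂ) x‖) 2 μc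
      = ENNReal.ofReal K * eLpNorm (v : AddCircle (2 * Real.pi) → ℂ) 2 μc := by
    have : (fun x => K * ‖(v : AddCircle (2 * Real.pi) → ℂ) x‖)
        = K • fun x => ‖(v : AddCircle (2 * Real.pi) → ℂ) x‖ := by
      funext x; simp [smul_eq_mul]
    rw [this, eLpNorm_const_smul, eLpNorm_norm]
    congr 1
    rw [Real.enorm_of_nonneg hK0]
  have hfin : eLpNorm ((u - v : L2h) : AddCircle (2 * Real.pi) → ℂ) 2 μc
      = ENNReal.ofReal ‖u - v‖ := by
    rw [Lp.norm_def, ENNReal.ofReal_toReal (Lp.eLpNorm_ne_top _)]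
  have hfv : eLpNorm ((v : L2h) : AddCircle (2 * Real.pi) → ℂ) 2 μc
      = ENNReal.ofReal ‖v‖ := by
    rw [Lp.norm_def, ENNReal.ofReal_toReal (Lp.eLpNorm_ne_top _)]
  rw [hnorm]
  have e3 : eLpNorm (fun x => PhiFun V t u x - PhiFun V t v x) 2 μc
      ≤ ENNReal.ofReal (‖u - v‖ + K * ‖v‖) := by
    refine e1.trans ?_
    rw [e2, hfin, hfv, ← ENNReal.ofReal_mul hK0, ← ENNReal.ofReal_add (norm_nonneg _)
      (by positivity)]
  calc (eLpNorm (fun x => PhiFun V t u x - PhiFun V t v x) 2 μc).toReal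
      ≤ (ENNReal.ofReal (‖u - v‖ + K * ‖v‖)).toReal :=
        ENNReal.toReal_mono ENNReal.ofReal_ne_top e3
    _ = ‖u - v‖ + K * ‖v‖ := ENNReal.toReal_ofReal (by positivity)

lemma phiL_continuous (V : C(AddCircle (2 * Real.pi), ℝ)) (t : ℝ) :
    Continuous (PhiL V t) := by
  rw [Metric.continuous_iff]
  intro v ε hε
  set C := 1 + |t| * (‖V‖ * (2 * ‖v‖ + 1)) * ‖v‖ with hC
  have hC0 : 0 < C := by positivity
  refine ⟨min 1 (ε / C), by positivity, fun u hu => ?_⟩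
  have hd : dist u v = ‖u - v‖ := dist_eq_norm u v
  have h1 : ‖u - v‖ < 1 := by
    rw [← hd]; exact lt_of_lt_of_le hu (min_le_left _ _)
  have h1' : ‖u - v‖ < ε / C := by
    rw [← hd]; exact lt_of_lt_of_le hu (min_le_right _ _)
  have h2 : ‖u‖ ≤ ‖v‖ + 1 := by
    have := norm_sub_norm_le u v
    linarith
  calc dist (PhiL V t u) (PhiL V t v) = ‖PhiL V t u - PhiL V t v‖ := dist_eq_norm _ _
    _ ≤ ‖u - v‖ + (|t| * (‖V‖ * ((‖u‖ + ‖v‖) * ‖u - v‖))) * ‖v‖ := phiL_sub_le V t u v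
    _ ≤ C * ‖u - v‖ := by
        rw [hC]
        have h3 : 0 ≤ ‖u - v‖ := norm_nonneg _
        have h4 : 0 ≤ |t| := abs_nonneg t
        have h5 : 0 ≤ ‖V‖ := norm_nonneg V
        have h6 : 0 ≤ ‖v‖ := norm_nonneg v
        nlinarith [mul_nonneg (mul_nonneg h4 h5) (mul_nonneg h3 h6)]
    _ < C * (ε / C) := by
        exact mul_lt_mul_of_pos_left h1' hC0
    _ = ε := by field_simp

/-- The expectation of the inner product of two independent integrable random variables,
the second of which is centered, vanishes. -/
lemma cross_zero {Ω : Type*} [MeasurableSpace Ω] (P : Measure Ω) [IsProbabilityMeasure P]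
    [mL2 : MeasurableSpace L2h] [BorelSpace L2h]
    (f g : Ω → L2h) (hf : Measurable f) (hg : Measurable g)
    (hfg : IndepFun f g P) (hfi : Integrable f P) (hgi : Integrable g P)
    (hg0 : ∫ ω, g ω ∂P = 0) :
    ∫ ω, (inner ℂ (f ω) (g ω) : ℂ) ∂P = 0 := by
  have hpair : AEMeasurable (fun ω => (f ω, g ω)) P := (hf.prodMk hg).aemeasurable
  have hmap := (indepFun_iff_map_prod_eq_prod_map_map hf.aemeasurable hg.aemeasurable).mp hfg
  have hcont : Continuous (fun p : L2h × L2h => (inner ℂ p.1 p.2 : ℂ)) := continuous_inner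
  have hNf : Integrable (fun x : L2h => ‖x‖) (P.map f) := by
    rw [integrable_map_measure continuous_norm.aestronglyMeasurable hf.aemeasurable]
    exact hfi.norm
  have hNg : Integrable (fun x : L2h => ‖x‖) (P.map g) := by
    rw [integrable_map_measure continuous_norm.aestronglyMeasurable hg.aemeasurable]
    exact hgi.norm
  have hIg : Integrable (fun y : L2h => y) (P.map g) := by
    have h : Integrable (id : L2h → L2h) (P.map g) := by
      rw [integrable_map_measure aestronglyMeasurable_id hg.aemeasurable]
      exact hgi
    exact h
  have hg0' : ∫ y, y ∂(P.map g) = 0 :=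
    (integral_map hg.aemeasurable aestronglyMeasurable_id).trans hg0
  have hprodint : Integrable (fun p : L2h × L2h => (inner ℂ p.1 p.2 : ℂ))
      ((P.map f).prod (P.map g)) := by
    refine Integrable.mono' (hNf.mul_prod hNg) hcont.aestronglyMeasurable
      (Filter.Eventually.of_forall fun p => ?_)
    exact norm_inner_le_norm _ _
  calc ∫ ω, (inner ℂ (f ω) (g ω) : ℂ) ∂P
      = ∫ p, (inner ℂ p.1 p.2 : ℂ) ∂(P.map (fun ω => (f ω, g ω))) :=
        (integral_map hpair hcont.aestronglyMeasurable).symm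
    _ = ∫ p, (inner ℂ p.1 p.2 : ℂ) ∂((P.map f).prod (P.map g)) := by rw [hmap]
    _ = ∫ x, ∫ y, (inner ℂ x y : ℂ) ∂(P.map g) ∂(P.map f) := integral_prod _ hprodint
    _ = ∫ x, (inner ℂ x (∫ y, y ∂(P.map g)) : ℂ) ∂(P.map f) := by
        refine integral_congr_ae (Filter.Eventually.of_forall fun x => ?_)
        exact integral_inner hIg x
    _ = 0 := by rw [hg0']; simp

/-- Trace formula for the mass of the splitting scheme
`u_{n+1} = S(τ)(Φ_τ(u_n) − i α δW_n)`: for every `n`,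
`𝔼[‖u_n‖²_{L²}] = ‖u₀‖²_{L²} + n α² c`, where `c = 𝔼[‖δW_n‖²_{L²}]`. -/
theorem stmt9 {Ω : Type*} [MeasurableSpace Ω] (P : Measure Ω) [IsProbabilityMeasure P]
    [mL2 : MeasurableSpace L2h] [BorelSpace L2h]
    (u₀ : L2h) (τ α : ℝ) (hτ : 0 < τ) (hα : 0 < α)
    (V : C(AddCircle (2 * Real.pi), ℝ))
    (S : L2h ≃ₗᵢ[ℂ] L2h)
    (hS : ∀ k : ℤ, S (fourierB k) = Complex.exp (Complex.I * τ * (k : ℂ) ^ 2) • fourierB k)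
    (δW : ℕ → Ω → L2h) (c : ℝ) (hc : 0 ≤ c)
    (hind : iIndepFun δW P)
    (hmeas : ∀ n, Measurable (δW n))
    (hint : ∀ n, Integrable (δW n) P)
    (hmean : ∀ n, ∫ ω, δW n ω ∂P = 0)
    (hsqint : ∀ n, Integrable (fun ω => ‖δW n ω‖ ^ 2) P)
    (hvar : ∀ n, ∫ ω, ‖δW n ω‖ ^ 2 ∂P = c)
    (u : ℕ → Ω → L2h)
    (hu0 : ∀ ω, u 0 ω = u₀)
    (hrec : ∀ n ω, u (n + 1) ω = S (PhiL V τ (u n ω) - (Complex.I * (α : ℂ)) • δW n ω)) :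
    ∀ n : ℕ, ∫ ω, ‖u n ω‖ ^ 2 ∂P = ‖u₀‖ ^ 2 + n * α ^ 2 * c := by
  have hPhiCont : Continuous (PhiL V τ) := phiL_continuous V τ
  -- measurability of `u n` w.r.t. the σ-algebra generated by the first `n` noises
  have hmeasU : ∀ n : ℕ,
      Measurable[⨆ i ∈ Set.Iio n, MeasurableSpace.comap (δW i) mL2] (u n) := by
    intro n
    induction n with
    | zero =>
      have h0 : u 0 = fun _ => u₀ := funext hu0
      rw [h0]; exact measurable_const
    | succ n ih =>
      have hmono : (⨆ i ∈ Set.Iio n, MeasurableSpace.comap (δW i) mL2)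
          ≤ ⨆ i ∈ Set.Iio (n + 1), MeasurableSpace.comap (δW i) mL2 :=
        biSup_mono fun i hi => lt_trans hi (lt_add_one n)
      have h1 : Measurable[⨆ i ∈ Set.Iio (n + 1), MeasurableSpace.comap (δW i) mL2] (u n) :=
        ih.mono hmono le_rfl
      have h2 : Measurable[⨆ i ∈ Set.Iio (n + 1), MeasurableSpace.comap (δW i) mL2] (δW n) :=
        Measurable.of_comap_le
          (le_iSup₂ (f := fun i (_ : i ∈ Set.Iio (n + 1)) => MeasurableSpace.comap (δW i) mL2)
            n (Set.mem_Iio.mpr (Nat.lt_succ_self n)))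
      have hform : u (n + 1) = fun ω => S (PhiL V τ (u n ω) - (Complex.I * (α : ℂ)) • δW n ω) :=
        funext (hrec n)
      rw [hform]
      exact S.continuous.measurable.comp
        ((hPhiCont.measurable.comp h1).sub
          (((continuous_const_smul (Complex.I * (α : ℂ))).measurable).comp h2))
  have hGle : ∀ n : ℕ, (⨆ i ∈ Set.Iio n, MeasurableSpace.comap (δW i) mL2)
      ≤ ‹MeasurableSpace Ω› := fun n => iSup₂_le fun i _ => (hmeas i).comap_le
  have hmeasU' : ∀ n, Measurable (u n) := fun n => (hmeasU n).mono (hGle n) le_rfl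
  have hIndep : ∀ n : ℕ, IndepFun (fun ω => PhiL V τ (u n ω)) (δW n) P := by
    intro n
    have hbi := indep_biSup_compl (fun i => (hmeas i).comap_le)
      ((iIndepFun_iff_iIndep _ _ _).mp hind) (Set.Iio n)
    have h1 : Indep (⨆ i ∈ Set.Iio n, MeasurableSpace.comap (δW i) mL2)
        (MeasurableSpace.comap (δW n) mL2) P :=
      indep_of_indep_of_le_right hbi
        (le_iSup₂ (f := fun i (_ : i ∈ (Set.Iio n)ᶜ) => MeasurableSpace.comap (δW i) mL2)
          n (by simp))
    rw [IndepFun_iff_Indep]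
    refine indep_of_indep_of_le_left h1 ?_
    exact Measurable.comap_le (hPhiCont.measurable.comp (hmeasU n))
  -- main induction
  have main : ∀ n : ℕ, Integrable (fun ω => ‖u n ω‖ ^ 2) P ∧
      ∫ ω, ‖u n ω‖ ^ 2 ∂P = ‖u₀‖ ^ 2 + n * α ^ 2 * c := by
    intro n
    induction n with
    | zero =>
      have h0 : (fun ω => ‖u 0 ω‖ ^ 2) = fun _ => ‖u₀‖ ^ 2 := funext fun ω => by rw [hu0]
      constructor
      · rw [h0]; exact integrable_const _
      · rw [h0]; simp
    | succ n ih =>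
      obtain ⟨hInt, hEq⟩ := ih
      set a : Ω → L2h := fun ω => PhiL V τ (u n ω) with ha
      have hnorm_a : ∀ ω, ‖a ω‖ = ‖u n ω‖ := fun ω => phiL_norm V τ (u n ω)
      have hMa : Measurable a := hPhiCont.measurable.comp (hmeasU' n)
      have hpt : ∀ ω, ‖u (n + 1) ω‖ ^ 2
          = ‖u n ω‖ ^ 2 + α ^ 2 * ‖δW n ω‖ ^ 2 -
            2 * RCLike.re (Complex.I * (α : ℂ) * (inner ℂ (a ω) (δW n ω) : ℂ)) := by
        intro ω
        rw [hrec n ω, S.norm_map]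
        rw [@norm_sub_sq ℂ L2h _ _ _ (a ω) ((Complex.I * (α : ℂ)) • δW n ω)]
        rw [inner_smul_right]
        have hsm : ‖(Complex.I * (α : ℂ)) • δW n ω‖ = α * ‖δW n ω‖ := by
          rw [norm_smul]
          simp [abs_of_pos hα]
        rw [hsm, hnorm_a ω]
        ring
      -- integrability of pieces
      have h1mem : MemLp (fun ω => ‖u n ω‖) 2 P :=
        (memLp_two_iff_integrable_sq ((hmeasU' n).norm.aestronglyMeasurable)).mpr hInt
      have h2mem : MemLp (fun ω => ‖δW n ω‖) 2 P :=
        (memLp_two_iff_integrable_sq ((hmeas n).norm.aestronglyMeasurable)).mpr (hsqint n)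
      have hmulP : Integrable (fun ω => ‖u n ω‖ * ‖δW n ω‖) P :=
        mul_int_of_memℒp2 h1mem h2mem
      have hinner_int : Integrable (fun ω => (inner ℂ (a ω) (δW n ω) : ℂ)) P := by
        refine Integrable.mono' hmulP ?_ (Filter.Eventually.of_forall fun ω => ?_)
        · exact (continuous_inner.comp_aestronglyMeasurable
            ((hMa.prodMk (hmeas n)).aestronglyMeasurable))
        · calc ‖(inner ℂ (a ω) (δW n ω) : ℂ)‖ ≤ ‖a ω‖ * ‖δW n ω‖ := norm_inner_le_norm _ _
            _ = ‖u n ω‖ * ‖δW n ω‖ := by rw [hnorm_a ω]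
      have hIa : Integrable a P := by
        refine Integrable.mono' (h1mem.integrable one_le_two) hMa.aestronglyMeasurable
          (Filter.Eventually.of_forall fun ω => ?_)
        rw [hnorm_a ω]
      have hcross : ∫ ω, (inner ℂ (a ω) (δW n ω) : ℂ) ∂P = 0 :=
        cross_zero P a (δW n) hMa (hmeas n) (hIndep n) hIa (hint n) (hmean n)
      have hre_int : Integrable
          (fun ω => RCLike.re (Complex.I * (α : ℂ) * (inner ℂ (a ω) (δW n ω) : ℂ))) P :=
        (hinner_int.const_mul _).re
      have hIntSucc : Integrable (fun ω => ‖u (n + 1) ω‖ ^ 2) P := by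
        have hfe : (fun ω => ‖u (n + 1) ω‖ ^ 2)
            = fun ω => ‖u n ω‖ ^ 2 + α ^ 2 * ‖δW n ω‖ ^ 2 -
              2 * RCLike.re (Complex.I * (α : ℂ) * (inner ℂ (a ω) (δW n ω) : ℂ)) := funext hpt
        rw [hfe]
        exact (hInt.add ((hsqint n).const_mul _)).sub (hre_int.const_mul _)
      refine ⟨hIntSucc, ?_⟩
      have hre0 : ∫ ω, RCLike.re (Complex.I * (α : ℂ) * (inner ℂ (a ω) (δW n ω) : ℂ)) ∂P = 0 := by
        rw [integral_re (hinner_int.const_mul _)]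
        rw [integral_const_mul, hcross, mul_zero]
        simp
      calc ∫ ω, ‖u (n + 1) ω‖ ^ 2 ∂P
          = ∫ ω, (‖u n ω‖ ^ 2 + α ^ 2 * ‖δW n ω‖ ^ 2 -
              2 * RCLike.re (Complex.I * (α : ℂ) * (inner ℂ (a ω) (δW n ω) : ℂ))) ∂P := by
            simp only [hpt]
        _ = (∫ ω, (‖u n ω‖ ^ 2 + α ^ 2 * ‖δW n ω‖ ^ 2) ∂P) -
            ∫ ω, 2 * RCLike.re (Complex.I * (α : ℂ) * (inner ℂ (a ω) (δW n ω) : ℂ)) ∂P :=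
          integral_sub (hInt.add ((hsqint n).const_mul _)) (hre_int.const_mul _)
        _ = ((∫ ω, ‖u n ω‖ ^ 2 ∂P) + ∫ ω, α ^ 2 * ‖δW n ω‖ ^ 2 ∂P) -
            2 * ∫ ω, RCLike.re (Complex.I * (α : ℂ) * (inner ℂ (a ω) (δW n ω) : ℂ)) ∂P := by
          rw [integral_add hInt ((hsqint n).const_mul _), integral_const_mul, integral_const_mul]
        _ = ‖u₀‖ ^ 2 + (n + 1 : ℕ) * α ^ 2 * c := by
          rw [hEq, integral_const_mul, hvar n, hre0]
          push_cast; ring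
  exact fun n => (main n).2
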